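/- There exist constants C > 0 and 0 < α < 1 such that, for the right action of the first Grigorchuk group G on the G-orbit of the boundary point ρ = 1^∞ with generating set S = {a, b, c, d}, the inverted orbit growth function satisfies Δ_ρ^S(n) ≤ C n^α and the number of distinct inverted orbits satisfies N_ρ^S(n) ≤ exp(C n^α) for every n ∈ ℕ. -/

import Mathlib

noncomputable section

/-! ### The Grigorchuk generators -/

namespace Grig

def aFun : List Bool → List Bool
  | [] => []
  | x :: w => (!x) :: w

mutual
  def bFun : List Bool → List Bool
    | [] => []
    | false :: w => false :: aFun w
    | true :: w => true :: cFun w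
  def cFun : List Bool → List Bool
    | [] => []
    | false :: w => false :: aFun w
    | true :: w => true :: dFun w
  def dFun : List Bool → List Bool
    | [] => []
    | false :: w => false :: w
    | true :: w => true :: bFun w
end

theorem aFun_involutive : Function.Involutive aFun := by
  intro w
  match w with
  | [] => rfl
  | x :: w => simp [aFun]

theorem bcd_involutive :
    ∀ w : List Bool, bFun (bFun w) = w ∧ cFun (cFun w) = w ∧ dFun (dFun w) = w := by
  intro w
  induction w with
  | nil => exact ⟨rfl, rfl, rfl⟩
  | cons x w ih =>
    rcases x with _ | _
    · simp [bFun, cFun, dFun, aFun_involutive w]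
    · simp [bFun, cFun, dFun, ih.1, ih.2.1, ih.2.2]

theorem bFun_involutive : Function.Involutive bFun := fun w => (bcd_involutive w).1
theorem cFun_involutive : Function.Involutive cFun := fun w => (bcd_involutive w).2.1
theorem dFun_involutive : Function.Involutive dFun := fun w => (bcd_involutive w).2.2

theorem aFun_length : ∀ w : List Bool, (aFun w).length = w.length := by
  intro w
  match w with
  | [] => rfl
  | x :: w => simp [aFun]

theorem bcd_length : ∀ w : List Bool,
    (bFun w).length = w.length ∧ (cFun w).length = w.length ∧ (dFun w).length = w.length := by
  intro w
  induction w with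
  | nil => exact ⟨rfl, rfl, rfl⟩
  | cons x w ih =>
    rcases x with _ | _
    · simp [bFun, cFun, dFun, aFun_length w]
    · simp [bFun, cFun, dFun, ih.1, ih.2.1, ih.2.2]

theorem bFun_length : ∀ w, (bFun w).length = w.length := fun w => (bcd_length w).1
theorem cFun_length : ∀ w, (cFun w).length = w.length := fun w => (bcd_length w).2.1
theorem dFun_length : ∀ w, (dFun w).length = w.length := fun w => (bcd_length w).2.2

/-- The generators of the first Grigorchuk group as permutations of the vertex set
`{0,1}*` of the rooted binary tree. -/
def aPerm : Equiv.Perm (List Bool) := aFun_involutive.toPerm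
def bPerm : Equiv.Perm (List Bool) := bFun_involutive.toPerm
def cPerm : Equiv.Perm (List Bool) := cFun_involutive.toPerm
def dPerm : Equiv.Perm (List Bool) := dFun_involutive.toPerm

/-- The generating set `S = {a, b, c, d}` (a set of involutions). -/
def Sset : Set (Equiv.Perm (List Bool)) := {aPerm, bPerm, cPerm, dPerm}

/-- The first Grigorchuk group. -/
def Grigorchuk : Subgroup (Equiv.Perm (List Bool)) := Subgroup.closure Sset

/-- Word length with respect to `S = {a, b, c, d}`. -/
def wordLength (g : Equiv.Perm (List Bool)) : ℕ :=
  sInf {k | ∃ l : List (Equiv.Perm (List Bool)),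
    (∀ x ∈ l, x ∈ Sset) ∧ l.length = k ∧ l.prod = g}

/-- The growth function of the first Grigorchuk group with respect to `S`. -/
def growthGrig (m : ℕ) : ℕ :=
  Nat.card {g : Equiv.Perm (List Bool) |
    ∃ l : List (Equiv.Perm (List Bool)), (∀ x ∈ l, x ∈ Sset) ∧ l.length ≤ m ∧ l.prod = g}

/-! ### Level transfer -/

def levelFun (n : ℕ) (f : List Bool → List Bool) (v : Fin n → Bool) : Fin n → Bool :=
  fun i => (f (List.ofFn v)).getD i false

theorem levelFun_involutive (n : ℕ) (f : List Bool → List Bool)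
    (hlen : ∀ l, (f l).length = l.length) (hinv : Function.Involutive f) :
    Function.Involutive (levelFun n f) := by
  intro v
  have key : ∀ u : Fin n → Bool, List.ofFn (levelFun n f u) = f (List.ofFn u) := by
    intro u
    apply List.ext_getElem
    · simp [hlen]
    · intro i h1 h2
      simp only [List.getElem_ofFn]
      simp [levelFun, List.getD_eq_getElem, h2]
  funext i
  simp only [levelFun, key v, hinv (List.ofFn v)]
  simp [List.getD_eq_getElem]

/-- The images `a_n, b_n, c_n, d_n` of the Grigorchuk generators in `Sym(X_n)`,
where the `n`-th level `X_n = {0,1}^n` is identified with `Fin n → Bool`. -/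
def aLev (n : ℕ) : Equiv.Perm (Fin n → Bool) :=
  (levelFun_involutive n aFun aFun_length aFun_involutive).toPerm
def bLev (n : ℕ) : Equiv.Perm (Fin n → Bool) :=
  (levelFun_involutive n bFun bFun_length bFun_involutive).toPerm
def cLev (n : ℕ) : Equiv.Perm (Fin n → Bool) :=
  (levelFun_involutive n cFun cFun_length cFun_involutive).toPerm
def dLev (n : ℕ) : Equiv.Perm (Fin n → Bool) :=
  (levelFun_involutive n dFun dFun_length dFun_involutive).toPerm

end Grig

/-! ### The boundary action and actions of words -/

/-- The (continuous extension to the boundary `∂T = {0,1}^ℕ` of the) action of a tree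
automorphism on the boundary of the rooted binary tree. -/
def boundaryAct (g : Equiv.Perm (List Bool)) (ξ : ℕ → Bool) : ℕ → Bool :=
  fun n => (g (List.ofFn fun i : Fin (n + 1) => ξ i)).getD n false

/-- Applying a word of generators to a vertex, letter by letter: the right action of the
word `l` (the generators in `S` are involutions). -/
def wordApply (l : List (Equiv.Perm (List Bool))) (v : List Bool) : List Bool :=
  l.foldl (fun v s => s v) v

/-- The right action of a word on a boundary point. -/
def wordApplyB (l : List (Equiv.Perm (List Bool))) (ξ : ℕ → Bool) : ℕ → Bool :=
  l.foldl (fun ξ s => boundaryAct s ξ) ξ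

/-- The boundary point `ρ = 1^∞`. -/
def rhoInf : ℕ → Bool := fun _ => true

/-- The vertex `ρ_n = 1^n` of the `n`-th level. -/
def rhoVertex (n : ℕ) : List Bool := List.replicate n true

/-- The vertex `η_n = 1^{n-1}0` of the `n`-th level. -/
def etaVertex (n : ℕ) : List Bool := List.replicate (n - 1) true ++ [false]
/-! ### Inverted orbits of the Grigorchuk group on the orbit of `ρ = 1^∞` -/

/-- The inverted orbit `O_ξ(l) = {ξ, ξ·s_ℓ, ξ·s_{ℓ-1}s_ℓ, …, ξ·s_1⋯s_ℓ}` of the word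
`l = s_1 ⋯ s_ℓ` at the boundary point `ξ`. -/
def invOrbitB (l : List (Equiv.Perm (List Bool))) (ξ : ℕ → Bool) : Set (ℕ → Bool) :=
  {x | ∃ i : ℕ, x = wordApplyB (l.drop i) ξ}

/-- The inverted orbit growth function `Δ_ρ^S` of the Grigorchuk group acting on the
orbit of `ρ = 1^∞`. -/
noncomputable def DeltaB (m : ℕ) : ℕ :=
  sSup {k | ∃ l : List (Equiv.Perm (List Bool)),
    (∀ x ∈ l, x ∈ Grig.Sset) ∧ l.length ≤ m ∧ k = Nat.card (invOrbitB l rhoInf)}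

/-- The number `N_ρ^S(m)` of distinct inverted orbits of words of length at most `m`. -/
noncomputable def NorbB (m : ℕ) : ℕ :=
  Nat.card {O : Set (ℕ → Bool) | ∃ l : List (Equiv.Perm (List Bool)),
    (∀ x ∈ l, x ∈ Grig.Sset) ∧ l.length ≤ m ∧ O = invOrbitB l rhoInf}
namespace BE
open Grig

abbrev Pt := ℕ → Bool

def shiftP (ξ : Pt) : Pt := fun n => ξ (n+1)

def consP (x : Bool) (τ : Pt) : Pt := fun n => match n with
  | 0 => x
  | (m+1) => τ m

@[simp] lemma consP_zero (x : Bool) (τ : Pt) : consP x τ 0 = x := rfl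
@[simp] lemma consP_succ (x : Bool) (τ : Pt) (n : ℕ) : consP x τ (n+1) = τ n := rfl
@[simp] lemma shiftP_consP (x : Bool) (τ : Pt) : shiftP (consP x τ) = τ := rfl
lemma consP_eta (ξ : Pt) : consP (ξ 0) (shiftP ξ) = ξ := by
  funext n; cases n <;> rfl

lemma consP_injective (x : Bool) : Function.Injective (consP x) := by
  intro τ τ' h
  have := congrArg shiftP h
  simpa using this

lemma consP_ne_of_head (x y : Bool) (τ τ' : Pt) (h : x ≠ y) : consP x τ ≠ consP y τ' := by
  intro he
  exact h (by simpa using congrFun he 0)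

noncomputable def aB : Pt → Pt := boundaryAct Grig.aPerm
noncomputable def bB : Pt → Pt := boundaryAct Grig.bPerm
noncomputable def cB : Pt → Pt := boundaryAct Grig.cPerm
noncomputable def dB : Pt → Pt := boundaryAct Grig.dPerm

lemma ofFn_succ_pref (ξ : Pt) (n : ℕ) :
    (List.ofFn fun i : Fin (n+1) => ξ i) = ξ 0 :: (List.ofFn fun i : Fin n => shiftP ξ i) := by
  rw [List.ofFn_succ]
  rfl

lemma getD_ofFn (τ : Pt) (m : ℕ) :
    (List.ofFn fun i : Fin (m+1) => τ i).getD m false = τ m := by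
  have h : m < (List.ofFn fun i : Fin (m+1) => τ i).length := by simp
  rw [List.getD_eq_getElem _ _ h, List.getElem_ofFn]

lemma aB_eq (ξ : Pt) : aB ξ = consP (!ξ 0) (shiftP ξ) := by
  funext n
  show (Grig.aPerm (List.ofFn fun i : Fin (n+1) => ξ i)).getD n false = _
  rw [Grig.aPerm, Function.Involutive.coe_toPerm, ofFn_succ_pref, Grig.aFun]
  cases n with
  | zero => rfl
  | succ m =>
      show (List.ofFn fun i : Fin (m+1) => shiftP ξ i).getD m false = shiftP ξ m
      exact getD_ofFn _ m

lemma bB_eq (ξ : Pt) :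
    bB ξ = consP (ξ 0) (cond (ξ 0) (cB (shiftP ξ)) (aB (shiftP ξ))) := by
  funext n
  show (Grig.bPerm (List.ofFn fun i : Fin (n+1) => ξ i)).getD n false = _
  rw [Grig.bPerm, Function.Involutive.coe_toPerm, ofFn_succ_pref]
  cases h : ξ 0 with
  | false =>
      show (Grig.bFun (false :: _)).getD n false = _
      rw [Grig.bFun]
      cases n with
      | zero => rfl
      | succ m =>
          show (Grig.aFun (List.ofFn fun i : Fin (m+1) => shiftP ξ i)).getD m false = _
          simp only [consP_succ, cond_false]
          show _ = (Grig.aPerm _).getD m false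
          rw [Grig.aPerm, Function.Involutive.coe_toPerm]
  | true =>
      show (Grig.bFun (true :: _)).getD n false = _
      rw [Grig.bFun]
      cases n with
      | zero => rfl
      | succ m =>
          show (Grig.cFun (List.ofFn fun i : Fin (m+1) => shiftP ξ i)).getD m false = _
          simp only [consP_succ, cond_true]
          show _ = (Grig.cPerm _).getD m false
          rw [Grig.cPerm, Function.Involutive.coe_toPerm]

lemma cB_eq (ξ : Pt) :
    cB ξ = consP (ξ 0) (cond (ξ 0) (dB (shiftP ξ)) (aB (shiftP ξ))) := by
  funext n
  show (Grig.cPerm (List.ofFn fun i : Fin (n+1) => ξ i)).getD n false = _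
  rw [Grig.cPerm, Function.Involutive.coe_toPerm, ofFn_succ_pref]
  cases h : ξ 0 with
  | false =>
      show (Grig.cFun (false :: _)).getD n false = _
      rw [Grig.cFun]
      cases n with
      | zero => rfl
      | succ m =>
          show (Grig.aFun (List.ofFn fun i : Fin (m+1) => shiftP ξ i)).getD m false = _
          simp only [consP_succ, cond_false]
          show _ = (Grig.aPerm _).getD m false
          rw [Grig.aPerm, Function.Involutive.coe_toPerm]
  | true =>
      show (Grig.cFun (true :: _)).getD n false = _
      rw [Grig.cFun]
      cases n with
      | zero => rfl
      | succ m =>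
          show (Grig.dFun (List.ofFn fun i : Fin (m+1) => shiftP ξ i)).getD m false = _
          simp only [consP_succ, cond_true]
          show _ = (Grig.dPerm _).getD m false
          rw [Grig.dPerm, Function.Involutive.coe_toPerm]

lemma dB_eq (ξ : Pt) :
    dB ξ = consP (ξ 0) (cond (ξ 0) (bB (shiftP ξ)) (shiftP ξ)) := by
  funext n
  show (Grig.dPerm (List.ofFn fun i : Fin (n+1) => ξ i)).getD n false = _
  rw [Grig.dPerm, Function.Involutive.coe_toPerm, ofFn_succ_pref]
  cases h : ξ 0 with
  | false =>
      show (Grig.dFun (false :: _)).getD n false = _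
      rw [Grig.dFun]
      cases n with
      | zero => rfl
      | succ m =>
          show (List.ofFn fun i : Fin (m+1) => shiftP ξ i).getD m false = _
          simp only [consP_succ, cond_false]
          exact getD_ofFn _ m
  | true =>
      show (Grig.dFun (true :: _)).getD n false = _
      rw [Grig.dFun]
      cases n with
      | zero => rfl
      | succ m =>
          show (Grig.bFun (List.ofFn fun i : Fin (m+1) => shiftP ξ i)).getD m false = _
          simp only [consP_succ, cond_true]
          show _ = (Grig.bPerm _).getD m false
          rw [Grig.bPerm, Function.Involutive.coe_toPerm]

-- cons-versions
lemma aB_cons (x : Bool) (τ : Pt) : aB (consP x τ) = consP (!x) τ := by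
  rw [aB_eq]; simp
lemma bB_cons (x : Bool) (τ : Pt) : bB (consP x τ) = consP x (cond x (cB τ) (aB τ)) := by
  rw [bB_eq]; simp
lemma cB_cons (x : Bool) (τ : Pt) : cB (consP x τ) = consP x (cond x (dB τ) (aB τ)) := by
  rw [cB_eq]; simp
lemma dB_cons (x : Bool) (τ : Pt) : dB (consP x τ) = consP x (cond x (bB τ) τ) := by
  rw [dB_eq]; simp

lemma aB_aB (ξ : Pt) : aB (aB ξ) = ξ := by
  rw [aB_eq ξ, aB_cons, Bool.not_not, consP_eta]

end BE
namespace BE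

lemma kleinPack : ∀ (n : ℕ) (ξ : Pt),
    cB (bB ξ) n = dB ξ n ∧ bB (cB ξ) n = dB ξ n ∧
    dB (cB ξ) n = bB ξ n ∧ cB (dB ξ) n = bB ξ n ∧
    bB (dB ξ) n = cB ξ n ∧ dB (bB ξ) n = cB ξ n := by
  intro n
  induction n with
  | zero =>
      intro ξ
      rw [bB_eq ξ, cB_eq ξ, dB_eq ξ, cB_cons, bB_cons, dB_cons, cB_cons, bB_cons, dB_cons]
      simp
  | succ m ih =>
      intro ξ
      rw [bB_eq ξ, cB_eq ξ, dB_eq ξ, cB_cons, bB_cons, dB_cons, cB_cons, bB_cons, dB_cons]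
      cases h : ξ 0
      · simp [aB_aB]
      · simp only [cond_true, consP_succ]
        obtain ⟨i1, i2, i3, i4, i5, i6⟩ := ih (shiftP ξ)
        exact ⟨i3, i4, i5, i6, i1, i2⟩

lemma invPack : ∀ (n : ℕ) (ξ : Pt),
    bB (bB ξ) n = ξ n ∧ cB (cB ξ) n = ξ n ∧ dB (dB ξ) n = ξ n := by
  intro n
  induction n with
  | zero =>
      intro ξ
      rw [bB_eq ξ, cB_eq ξ, dB_eq ξ, bB_cons, cB_cons, dB_cons]
      simp
  | succ m ih =>
      intro ξ
      rw [bB_eq ξ, cB_eq ξ, dB_eq ξ, bB_cons, cB_cons, dB_cons]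
      cases h : ξ 0
      · simp [aB_aB, shiftP]
      · simp only [cond_true, consP_succ]
        obtain ⟨i1, i2, i3⟩ := ih (shiftP ξ)
        exact ⟨i2, i3, i1⟩

lemma cB_bB (ξ : Pt) : cB (bB ξ) = dB ξ := funext fun n => (kleinPack n ξ).1
lemma bB_cB (ξ : Pt) : bB (cB ξ) = dB ξ := funext fun n => (kleinPack n ξ).2.1
lemma dB_cB (ξ : Pt) : dB (cB ξ) = bB ξ := funext fun n => (kleinPack n ξ).2.2.1
lemma cB_dB (ξ : Pt) : cB (dB ξ) = bB ξ := funext fun n => (kleinPack n ξ).2.2.2.1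
lemma bB_dB (ξ : Pt) : bB (dB ξ) = cB ξ := funext fun n => (kleinPack n ξ).2.2.2.2.1
lemma dB_bB (ξ : Pt) : dB (bB ξ) = cB ξ := funext fun n => (kleinPack n ξ).2.2.2.2.2
lemma bB_bB (ξ : Pt) : bB (bB ξ) = ξ := funext fun n => (invPack n ξ).1
lemma cB_cB (ξ : Pt) : cB (cB ξ) = ξ := funext fun n => (invPack n ξ).2.1
lemma dB_dB (ξ : Pt) : dB (dB ξ) = ξ := funext fun n => (invPack n ξ).2.2

/-- The Klein-plus group: `(β, γ, ε)` represents `b^β c^γ e^ε`. -/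
abbrev Kl := Bool × Bool × Bool

def mulK (x y : Kl) : Kl := (xor x.1 y.1, xor x.2.1 y.2.1, xor x.2.2 y.2.2)

/-- The boundary action of the Klein part of `κ`. -/
noncomputable def kB (κ : Kl) : Pt → Pt := fun ξ => cond κ.1 bB id (cond κ.2.1 cB id ξ)

lemma kB_merge (κ κ' : Kl) (ξ : Pt) : kB κ' (kB κ ξ) = kB (mulK κ κ') ξ := by
  obtain ⟨b1, c1, e1⟩ := κ
  obtain ⟨b2, c2, e2⟩ := κ'
  cases b1 <;> cases c1 <;> cases b2 <;> cases c2 <;>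
    simp [kB, mulK, bB_bB, cB_cB, dB_dB, bB_cB, cB_bB, dB_cB, cB_dB, bB_dB, dB_bB]

def secK (κ : Kl) : Kl := (κ.2.1, xor κ.1 κ.2.1, κ.2.2)
def secA (κ : Kl) : Bool := xor κ.1 κ.2.1

lemma kB_cons (κ : Kl) (x : Bool) (τ : Pt) :
    kB κ (consP x τ) = consP x (cond x (kB (secK κ) τ) (cond (secA κ) (aB τ) τ)) := by
  obtain ⟨b1, c1, e1⟩ := κ
  cases b1 <;> cases c1 <;> cases x <;>
    simp [kB, secK, secA, bB_cons, cB_cons, dB_cons, aB_aB, cB_dB, bB_cB, cB_bB]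

lemma rho_fix : ∀ n : ℕ, bB rhoInf n = true ∧ cB rhoInf n = true ∧ dB rhoInf n = true := by
  intro n
  induction n with
  | zero =>
      rw [bB_eq, cB_eq, dB_eq]
      exact ⟨rfl, rfl, rfl⟩
  | succ m ih =>
      have h0 : rhoInf 0 = true := rfl
      refine ⟨?_, ?_, ?_⟩
      · rw [bB_eq rhoInf]
        simp only [consP_succ, h0, cond_true]
        exact ih.2.1
      · rw [cB_eq rhoInf]
        simp only [consP_succ, h0, cond_true]
        exact ih.2.2
      · rw [dB_eq rhoInf]
        simp only [consP_succ, h0, cond_true]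
        exact ih.1

lemma bB_rho : bB rhoInf = rhoInf := funext fun n => (rho_fix n).1
lemma cB_rho : cB rhoInf = rhoInf := funext fun n => (rho_fix n).2.1
lemma dB_rho : dB rhoInf = rhoInf := funext fun n => (rho_fix n).2.2

lemma kB_rho (κ : Kl) : kB κ rhoInf = rhoInf := by
  obtain ⟨b1, c1, e1⟩ := κ
  cases b1 <;> cases c1 <;> simp [kB, bB_rho, cB_rho]

end BE
namespace BE

abbrev Letter := Option Kl

noncomputable def actL : Letter → Pt → Pt
  | none => aB
  | some κ => kB κ

def isE : Letter → Bool
  | none => false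
  | some κ => κ.2.2

def wK2 : Bool → Bool → ℕ
  | false, false => 0
  | true,  false => 90
  | false, true  => 66
  | true,  true  => 46

def wKl (κ : Kl) : ℕ := wK2 κ.1 κ.2.1 + cond κ.2.2 1 0

def wLet : Letter → ℕ
  | none => 70
  | some κ => wKl κ

def wWord (w : List Letter) : ℕ := (w.map wLet).sum

@[simp] lemma wWord_nil : wWord [] = 0 := rfl
@[simp] lemma wWord_cons (ℓ : Letter) (w : List Letter) :
    wWord (ℓ :: w) = wLet ℓ + wWord w := rfl

abbrev Pair := Set Pt × (Pt → Pt)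

noncomputable def step (ℓ : Letter) (P : Pair) : Pair :=
  (cond (isE ℓ) (symmDiff P.1 {P.2 rhoInf}) P.1, P.2 ∘ actL ℓ)

noncomputable def pairEval : List Letter → Pair
  | [] => (∅, id)
  | ℓ :: u => step ℓ (pairEval u)

@[simp] lemma pairEval_nil : pairEval [] = (∅, id) := rfl
@[simp] lemma pairEval_cons (ℓ : Letter) (u : List Letter) :
    pairEval (ℓ :: u) = step ℓ (pairEval u) := rfl

def idK : Kl := (false, false, false)

lemma kB_idK (ξ : Pt) : kB idK ξ = ξ := rfl

lemma step_idK (P : Pair) : step (some idK) P = P := by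
  refine Prod.ext rfl ?_
  rfl

lemma step_merge (κ κ' : Kl) (P : Pair) :
    step (some κ) (step (some κ') P) = step (some (mulK κ κ')) P := by
  refine Prod.ext ?_ ?_
  · show cond κ.2.2 (symmDiff (cond κ'.2.2 (symmDiff P.1 {P.2 rhoInf}) P.1)
      {(P.2 ∘ kB κ') rhoInf}) (cond κ'.2.2 (symmDiff P.1 {P.2 rhoInf}) P.1) =
      cond (xor κ.2.2 κ'.2.2) (symmDiff P.1 {P.2 rhoInf}) P.1
    have h : (P.2 ∘ kB κ') rhoInf = P.2 rhoInf := by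
      show P.2 (kB κ' rhoInf) = P.2 rhoInf
      rw [kB_rho]
    rw [h]
    cases he : κ.2.2 <;> cases he' : κ'.2.2 <;> simp [symmDiff_symmDiff_cancel_left]
  · show P.2 ∘ kB κ' ∘ kB κ = P.2 ∘ kB (mulK κ κ')
    funext ξ
    show P.2 (kB κ' (kB κ ξ)) = P.2 (kB (mulK κ κ') ξ)
    rw [kB_merge]

lemma step_aa (P : Pair) : step none (step none P) = P := by
  refine Prod.ext rfl ?_
  show P.2 ∘ aB ∘ aB = P.2
  funext ξ
  show P.2 (aB (aB ξ)) = P.2 ξ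
  rw [aB_aB]

abbrev NFr := List Kl

def toWordNF : NFr → List Letter
  | [] => []
  | [κ] => [some κ]
  | κ :: κ' :: s => some κ :: none :: toWordNF (κ' :: s)

noncomputable def nfEval (s : NFr) : Pair := pairEval (toWordNF s)

lemma nfEval_nil : nfEval [] = (∅, id) := rfl
lemma nfEval_single (κ : Kl) : nfEval [κ] = step (some κ) (∅, id) := rfl
lemma nfEval_cons (κ κ' : Kl) (s : NFr) :
    nfEval (κ :: κ' :: s) = step (some κ) (step none (nfEval (κ' :: s))) := rfl

def wNF : NFr → ℕ
  | [] => 0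
  | [κ] => wKl κ
  | κ :: κ' :: s => wKl κ + 70 + wNF (κ' :: s)

def pushL : Letter → NFr → NFr
  | some κ, [] => [κ]
  | some κ, κ₀ :: s => mulK κ κ₀ :: s
  | none, [] => [idK, idK]
  | none, κ₀ :: s => if κ₀ = idK ∧ s ≠ [] then s else idK :: κ₀ :: s

lemma wKl_mulK (κ κ' : Kl) : wKl (mulK κ κ') ≤ wKl κ + wKl κ' := by
  obtain ⟨a1, b1, c1⟩ := κ
  obtain ⟨a2, b2, c2⟩ := κ'
  cases a1 <;> cases b1 <;> cases c1 <;> cases a2 <;> cases b2 <;> cases c2 <;> decide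

lemma pushL_eval (ℓ : Letter) (s : NFr) :
    nfEval (pushL ℓ s) = step ℓ (nfEval s) := by
  match ℓ, s with
  | some κ, [] => rfl
  | some κ, κ₀ :: s =>
      show nfEval (mulK κ κ₀ :: s) = _
      match s with
      | [] =>
          rw [nfEval_single, nfEval_single, step_merge]
      | κ' :: s' =>
          rw [nfEval_cons, nfEval_cons, step_merge]
  | none, [] =>
      show nfEval [idK, idK] = step none (nfEval [])
      rw [nfEval_cons, nfEval_single, step_idK, step_idK]
      rfl
  | none, κ₀ :: s =>
      show nfEval (if κ₀ = idK ∧ s ≠ [] then s else idK :: κ₀ :: s) = _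
      by_cases h : κ₀ = idK ∧ s ≠ []
      · rw [if_pos h]
        obtain ⟨h1, h2⟩ := h
        subst h1
        match s, h2 with
        | κ' :: s', _ =>
            rw [nfEval_cons, step_idK, step_aa]
      · rw [if_neg h, nfEval_cons, step_idK]

def toNF (w : List Letter) : NFr := w.foldr pushL [idK]

lemma toNF_eval (w : List Letter) : nfEval (toNF w) = pairEval w := by
  induction w with
  | nil =>
      show nfEval [idK] = _
      rw [nfEval_single, step_idK, pairEval_nil]
  | cons ℓ u ih =>
      show nfEval (pushL ℓ (toNF u)) = _
      rw [pushL_eval, ih, pairEval_cons]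

lemma wNF_cons_le (κ : Kl) (s : NFr) : wNF (κ :: s) ≤ wKl κ + 70 + wNF s := by
  match s with
  | [] =>
      show wKl κ ≤ wKl κ + 70 + 0
      omega
  | κ' :: s' => exact le_refl _

lemma wNF_pushL (ℓ : Letter) (s : NFr) : wNF (pushL ℓ s) ≤ wLet ℓ + wNF s := by
  match ℓ, s with
  | some κ, [] => exact le_refl _
  | some κ, κ₀ :: s =>
      show wNF (mulK κ κ₀ :: s) ≤ wKl κ + wNF (κ₀ :: s)
      match s with
      | [] => exact wKl_mulK κ κ₀
      | κ' :: s' =>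
          show wKl (mulK κ κ₀) + 70 + wNF (κ' :: s') ≤ wKl κ + (wKl κ₀ + 70 + wNF (κ' :: s'))
          have := wKl_mulK κ κ₀
          omega
  | none, [] =>
      show wNF [idK, idK] ≤ wLet none + wNF []
      decide
  | none, κ₀ :: s =>
      show wNF (if κ₀ = idK ∧ s ≠ [] then s else idK :: κ₀ :: s) ≤ 70 + wNF (κ₀ :: s)
      by_cases h : κ₀ = idK ∧ s ≠ []
      · rw [if_pos h]
        obtain ⟨h1, h2⟩ := h
        subst h1
        match s, h2 with
        | κ' :: s', _ =>
            show wNF (κ' :: s') ≤ 70 + (wKl idK + 70 + wNF (κ' :: s'))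
            omega
      · rw [if_neg h]
        show wKl idK + 70 + wNF (κ₀ :: s) ≤ 70 + wNF (κ₀ :: s)
        have : wKl idK = 0 := rfl
        omega

lemma wNF_toNF (w : List Letter) : wNF (toNF w) ≤ wWord w := by
  induction w with
  | nil => exact le_refl _
  | cons ℓ u ih =>
      calc wNF (toNF (ℓ :: u)) = wNF (pushL ℓ (toNF u)) := rfl
      _ ≤ wLet ℓ + wNF (toNF u) := wNF_pushL ℓ (toNF u)
      _ ≤ wLet ℓ + wWord u := by omega
      _ = wWord (ℓ :: u) := rfl

end BE
namespace BE

def secW : NFr → List Letter × List Letter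
  | [] => ([], [])
  | κ :: s =>
      (some (secK κ) :: (secW s).2, cond (secA κ) (none :: (secW s).1) ((secW s).1))

def epsNF (s : NFr) : Bool := decide ((s.length - 1) % 2 = 1)

noncomputable def Phi (ε : Bool) (P Q : Pair) : Pair :=
  ((consP (!ε)) '' P.1 ∪ (consP ε) '' Q.1,
   fun ξ => consP (xor (ξ 0) ε) (cond (ξ 0) (P.2 (shiftP ξ)) (Q.2 (shiftP ξ))))

lemma Phi_base : Phi false (∅, id) (∅, id) = ((∅ : Set Pt), (id : Pt → Pt)) := by
  refine Prod.ext ?_ ?_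
  · show (consP true) '' ∅ ∪ (consP false) '' ∅ = ∅
    simp
  · funext ξ
    show consP (xor (ξ 0) false) (cond (ξ 0) (shiftP ξ) (shiftP ξ)) = ξ
    rw [Bool.xor_false]
    cases h : ξ 0 <;> simp only [cond_true, cond_false] <;> rw [← h, consP_eta]

lemma step_none_Phi (ε : Bool) (P Q : Pair) :
    step none (Phi ε P Q) = Phi (!ε) Q P := by
  refine Prod.ext ?_ ?_
  · show (consP (!ε)) '' P.1 ∪ (consP ε) '' Q.1 =
      (consP (!(!ε))) '' Q.1 ∪ (consP (!ε)) '' P.1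
    rw [Bool.not_not]
    exact (Set.union_comm _ _)
  · funext ξ
    show (Phi ε P Q).2 (aB ξ) = _
    rw [aB_eq]
    show consP (xor ((consP (!ξ 0) (shiftP ξ)) 0) ε)
        (cond ((consP (!ξ 0) (shiftP ξ)) 0)
          (P.2 (shiftP (consP (!ξ 0) (shiftP ξ)))) (Q.2 (shiftP (consP (!ξ 0) (shiftP ξ))))) = _
    rw [consP_zero, shiftP_consP]
    show consP (xor (!ξ 0) ε) (cond (!ξ 0) (P.2 (shiftP ξ)) (Q.2 (shiftP ξ))) =
      consP (xor (ξ 0) (!ε)) (cond (ξ 0) (Q.2 (shiftP ξ)) (P.2 (shiftP ξ)))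
    cases h : ξ 0 <;> simp

lemma union_symmDiff_singleton (A B : Set Pt) (p : Pt) (hp : p ∉ B) :
    symmDiff (A ∪ B) {p} = symmDiff A {p} ∪ B := by
  ext x
  simp only [Set.mem_symmDiff, Set.mem_union, Set.mem_singleton_iff]
  by_cases hx : x = p
  · subst hx
    tauto
  · tauto

lemma image_symmDiff_singleton (x : Bool) (A : Set Pt) (p : Pt) :
    (consP x) '' (symmDiff A {p}) = symmDiff ((consP x) '' A) {consP x p} := by
  rw [Set.image_symmDiff (consP_injective x) A {p}, Set.image_singleton]

lemma step_some_Phi (κ : Kl) (ε : Bool) (P Q : Pair) :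
    step (some κ) (Phi ε P Q) =
      Phi ε (step (some (secK κ)) P) (cond (secA κ) (step none Q) Q) := by
  refine Prod.ext ?_ ?_
  · show cond (κ.2.2) (symmDiff ((consP (!ε)) '' P.1 ∪ (consP ε) '' Q.1)
        {(Phi ε P Q).2 rhoInf}) ((consP (!ε)) '' P.1 ∪ (consP ε) '' Q.1) =
      (consP (!ε)) '' (cond ((secK κ).2.2) (symmDiff P.1 {P.2 rhoInf}) P.1) ∪
        (consP ε) '' (cond (secA κ) (step none Q) Q).1
    have hQ : (cond (secA κ) (step none Q) Q).1 = Q.1 := by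
      cases hs : secA κ
      · rfl
      · rfl
    rw [hQ]
    have hse : (secK κ).2.2 = κ.2.2 := rfl
    rw [hse]
    have hPhirho : (Phi ε P Q).2 rhoInf = consP (!ε) (P.2 rhoInf) := by
      show consP (xor (rhoInf 0) ε) (cond (rhoInf 0) (P.2 (shiftP rhoInf)) _) = _
      have h0 : rhoInf 0 = true := rfl
      rw [h0, Bool.true_xor]
      rfl
    rw [hPhirho]
    cases he : κ.2.2
    · rfl
    · show symmDiff ((consP (!ε)) '' P.1 ∪ (consP ε) '' Q.1) {consP (!ε) (P.2 rhoInf)} =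
        (consP (!ε)) '' (symmDiff P.1 {P.2 rhoInf}) ∪ (consP ε) '' Q.1
      rw [image_symmDiff_singleton]
      rw [union_symmDiff_singleton]
      rintro ⟨τ, _, hτ⟩
      exact consP_ne_of_head ε (!ε) τ (P.2 rhoInf) (by simp) hτ
  · funext ξ
    show (Phi ε P Q).2 (kB κ ξ) = _
    have hk : kB κ ξ = consP (ξ 0) (cond (ξ 0) (kB (secK κ) (shiftP ξ))
        (cond (secA κ) (aB (shiftP ξ)) (shiftP ξ))) := by
      conv_lhs => rw [← consP_eta ξ]
      rw [kB_cons]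
    rw [hk]
    show consP (xor ((consP (ξ 0) _) 0) ε) (cond ((consP (ξ 0) _) 0) (P.2 (shiftP (consP (ξ 0) _))) (Q.2 (shiftP (consP (ξ 0) _)))) = _
    rw [consP_zero, shiftP_consP]
    show consP (xor (ξ 0) ε)
        (cond (ξ 0) (P.2 (cond (ξ 0) (kB (secK κ) (shiftP ξ)) _))
          (Q.2 (cond (ξ 0) _ (cond (secA κ) (aB (shiftP ξ)) (shiftP ξ))))) =
      consP (xor (ξ 0) ε)
        (cond (ξ 0) ((P.2 ∘ actL (some (secK κ))) (shiftP ξ))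
          ((cond (secA κ) (step none Q) Q).2 (shiftP ξ)))
    cases h : ξ 0
    · simp only [cond_false]
      cases hs : secA κ
      · rfl
      · rfl
    · simp only [cond_true]
      rfl

lemma epsNF_cons (κ : Kl) (s : NFr) (h : s ≠ []) : epsNF (κ :: s) = !(epsNF s) := by
  unfold epsNF
  have h1 : 1 ≤ s.length := by
    cases s
    · exact absurd rfl h
    · simp
  simp only [List.length_cons]
  rcases Nat.even_or_odd s.length with he | ho
  · have h3 := Nat.even_iff.mp he
    have e1 : (s.length + 1 - 1) % 2 = 0 := by omega
    have e2 : (s.length - 1) % 2 = 1 := by omega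
    simp [e1, e2, h3]
  · have h3 := Nat.odd_iff.mp ho
    have e1 : (s.length + 1 - 1) % 2 = 1 := by omega
    have e2 : (s.length - 1) % 2 = 0 := by omega
    simp [e1, e2, h3]

theorem decompNF : ∀ s : NFr,
    nfEval s = Phi (epsNF s) (pairEval (secW s).1) (pairEval (secW s).2) := by
  intro s
  induction s with
  | nil =>
      show nfEval [] = Phi (epsNF []) (pairEval []) (pairEval [])
      rw [nfEval_nil, pairEval_nil]
      have : epsNF [] = false := rfl
      rw [this, Phi_base]
  | cons κ s' ih =>
      match s', ih with
      | [], _ =>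
          show nfEval [κ] = Phi (epsNF [κ]) (pairEval [some (secK κ)])
            (pairEval (cond (secA κ) [none] []))
          have he : epsNF [κ] = false := rfl
          rw [he, nfEval_single]
          conv_lhs => rw [show ((∅ : Set Pt), (id : Pt → Pt)) = Phi false (∅, id) (∅, id) from Phi_base.symm]
          rw [step_some_Phi]
          cases hs : secA κ <;> rfl
      | κ' :: s'', ih =>
          rw [nfEval_cons, ih, step_none_Phi, step_some_Phi]
          rw [epsNF_cons κ (κ' :: s'') (by simp)]
          show Phi (!(epsNF (κ' :: s'')))
              (step (some (secK κ)) (pairEval (secW (κ' :: s'')).2))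
              (cond (secA κ) (step none (pairEval (secW (κ' :: s'')).1))
                (pairEval (secW (κ' :: s'')).1)) =
            Phi (!(epsNF (κ' :: s'')))
              (pairEval (secW (κ :: κ' :: s'')).1) (pairEval (secW (κ :: κ' :: s'')).2)
          have hsw : secW (κ :: κ' :: s'') = (some (secK κ) :: (secW (κ' :: s'')).2,
              cond (secA κ) (none :: (secW (κ' :: s'')).1) ((secW (κ' :: s'')).1)) := rfl
          rw [hsw]
          cases hs : secA κ <;> rfl

end BE
namespace BE

lemma slot_bound (κ : Kl) :
    7 * (wKl (secK κ) + cond (secA κ) 70 0) ≤ 6 * wKl κ + 420 := by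
  obtain ⟨a, b, c⟩ := κ
  cases a <;> cases b <;> cases c <;> decide

lemma secW_fst_weight (κ : Kl) (s : NFr) :
    wWord (secW (κ :: s)).1 = wKl (secK κ) + wWord (secW s).2 := rfl

lemma secW_snd_weight (κ : Kl) (s : NFr) :
    wWord (secW (κ :: s)).2 = cond (secA κ) 70 0 + wWord (secW s).1 := by
  cases hs : secA κ
  · show wWord (cond (secA κ) _ _) = _
    rw [hs]
    simp
  · show wWord (cond (secA κ) _ _) = _
    rw [hs]
    rfl

lemma secW_weight : ∀ s : NFr,
    7 * (wWord (secW s).1 + wWord (secW s).2) ≤ 6 * wNF s + 420 := by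
  intro s
  induction s with
  | nil =>
      show 7 * (0 + 0) ≤ 6 * 0 + 420
      omega
  | cons κ s ih =>
      rw [secW_fst_weight, secW_snd_weight]
      have hb := slot_bound κ
      match s with
      | [] =>
          show 7 * (wKl (secK κ) + wWord (secW ([] : NFr)).2 +
            (cond (secA κ) 70 0 + wWord (secW ([] : NFr)).1)) ≤ 6 * wKl κ + 420
          have h1 : wWord (secW ([] : NFr)).1 = 0 := rfl
          have h2 : wWord (secW ([] : NFr)).2 = 0 := rfl
          omega
      | κ' :: s' =>
          show _ ≤ 6 * (wKl κ + 70 + wNF (κ' :: s')) + 420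
          omega

/-- The set of pairs reachable by normal-form words of weight at most `t`. -/
noncomputable def Reach (t : ℕ) : Set Pair := {p | ∃ s : NFr, wNF s ≤ t ∧ nfEval s = p}

lemma Reach_mono {t t' : ℕ} (h : t ≤ t') : Reach t ⊆ Reach t' := by
  rintro p ⟨s, hs, he⟩
  exact ⟨s, le_trans hs h, he⟩

lemma pairEval_mem_Reach (w : List Letter) (t : ℕ) (h : wWord w ≤ t) :
    pairEval w ∈ Reach t := by
  exact ⟨toNF w, le_trans (wNF_toNF w) h, toNF_eval w⟩

lemma wNF_length : ∀ s : NFr, 70 * (s.length - 1) ≤ wNF s := by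
  intro s
  match s with
  | [] => simp [wNF]
  | [κ] => simp [wNF]
  | κ :: κ' :: s' =>
      have ih := wNF_length (κ' :: s')
      show 70 * (s'.length + 2 - 1) ≤ wKl κ + 70 + wNF (κ' :: s')
      have h1 : (κ' :: s').length - 1 = s'.length := by simp
      rw [h1] at ih
      have h2 : s'.length + 2 - 1 = s'.length + 1 := by omega
      rw [h2]
      omega

lemma Reach_finite (t : ℕ) : (Reach t).Finite := by
  have h : Reach t ⊆ nfEval '' {s : NFr | s.length ≤ t + 1} := by
    rintro p ⟨s, hs, he⟩
    refine ⟨s, ?_, he⟩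
    have := wNF_length s
    simp only [Set.mem_setOf_eq]
    omega
  exact Set.Finite.subset (Set.Finite.image _ (List.finite_length_le Kl (t + 1))) h

noncomputable def MR (t : ℕ) : ℕ := (Reach t).ncard

lemma ncard_prodPair (X Y : Set Pair) : (X ×ˢ Y).ncard = X.ncard * Y.ncard := by
  rw [← Nat.card_coe_set_eq, ← Nat.card_coe_set_eq, ← Nat.card_coe_set_eq]
  rw [Nat.card_congr (Equiv.Set.prod X Y), Nat.card_prod]

noncomputable def PhiSet (X Y : Set Pair) : Set Pair :=
  (fun z : Pair × Pair => Phi true z.1 z.2) '' (X ×ˢ Y) ∪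
  (fun z : Pair × Pair => Phi false z.1 z.2) '' (X ×ˢ Y)

lemma PhiSet_ncard (X Y : Set Pair) (hX : X.Finite) (hY : Y.Finite) :
    (PhiSet X Y).ncard ≤ 2 * (X.ncard * Y.ncard) := by
  have hXY : (X ×ˢ Y).Finite := Set.Finite.prod hX hY
  calc (PhiSet X Y).ncard
      ≤ ((fun z : Pair × Pair => Phi true z.1 z.2) '' (X ×ˢ Y)).ncard +
        ((fun z : Pair × Pair => Phi false z.1 z.2) '' (X ×ˢ Y)).ncard :=
        Set.ncard_union_le _ _
    _ ≤ (X ×ˢ Y).ncard + (X ×ˢ Y).ncard :=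
        Nat.add_le_add (Set.ncard_image_le hXY) (Set.ncard_image_le hXY)
    _ = 2 * (X.ncard * Y.ncard) := by rw [ncard_prodPair]; ring

lemma Reach_subset_PhiSets (t : ℕ) :
    Reach t ⊆ ⋃ j ∈ Finset.range ((6 * t + 420) / 7 + 1),
      PhiSet (Reach j) (Reach ((6 * t + 420) / 7 - j)) := by
  rintro p ⟨s, hs, he⟩
  set J := (6 * t + 420) / 7 with hJ
  have hw := secW_weight s
  have hsum : wWord (secW s).1 + wWord (secW s).2 ≤ J := by
    rw [hJ]
    rw [Nat.le_div_iff_mul_le (by norm_num)]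
    calc (wWord (secW s).1 + wWord (secW s).2) * 7
        = 7 * (wWord (secW s).1 + wWord (secW s).2) := by ring
      _ ≤ 6 * wNF s + 420 := hw
      _ ≤ 6 * t + 420 := by omega
  set j := wWord (secW s).1 with hj
  have hjJ : j ≤ J := by omega
  have h2 : wWord (secW s).2 ≤ J - j := by omega
  have hdec := decompNF s
  simp only [Set.mem_iUnion]
  refine ⟨j, Finset.mem_range.mpr (by omega), ?_⟩
  have hP : pairEval (secW s).1 ∈ Reach j := pairEval_mem_Reach _ _ (le_refl _)
  have hQ : pairEval (secW s).2 ∈ Reach (J - j) := pairEval_mem_Reach _ _ h2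
  cases he' : epsNF s
  · right
    exact ⟨(pairEval (secW s).1, pairEval (secW s).2), Set.mk_mem_prod hP hQ,
      by rw [← he, hdec, he']⟩
  · left
    exact ⟨(pairEval (secW s).1, pairEval (secW s).2), Set.mk_mem_prod hP hQ,
      by rw [← he, hdec, he']⟩

lemma ncard_biUnion_le (f : ℕ → Set Pair) (hf : ∀ j, (f j).Finite) :
    ∀ n : ℕ, (⋃ j ∈ Finset.range n, f j).ncard ≤ ∑ j ∈ Finset.range n, (f j).ncard := by
  intro n
  induction n with
  | zero => simp
  | succ m ih =>
      rw [Finset.range_add_one]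
      rw [Finset.sum_insert (by simp)]
      have hu : (⋃ j ∈ insert m (Finset.range m), f j) =
          f m ∪ ⋃ j ∈ Finset.range m, f j := by
        simp [Set.biUnion_insert]
      rw [hu]
      calc (f m ∪ ⋃ j ∈ Finset.range m, f j).ncard
          ≤ (f m).ncard + (⋃ j ∈ Finset.range m, f j).ncard := Set.ncard_union_le _ _
        _ ≤ (f m).ncard + ∑ j ∈ Finset.range m, (f j).ncard := by omega

lemma MR_rec (t : ℕ) :
    MR t ≤ ∑ j ∈ Finset.range ((6 * t + 420) / 7 + 1),
      2 * (MR j * MR ((6 * t + 420) / 7 - j)) := by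
  set J := (6 * t + 420) / 7
  have hfin : (⋃ j ∈ Finset.range (J + 1), PhiSet (Reach j) (Reach (J - j))).Finite := by
    apply Set.Finite.biUnion (Finset.range (J+1)).finite_toSet
    intro j _
    apply Set.Finite.union <;>
      exact Set.Finite.image _ (Set.Finite.prod (Reach_finite _) (Reach_finite _))
  have h1 : MR t ≤ (⋃ j ∈ Finset.range (J + 1),
      PhiSet (Reach j) (Reach (J - j))).ncard :=
    Set.ncard_le_ncard (Reach_subset_PhiSets t) hfin
  calc MR t ≤ _ := h1
    _ ≤ ∑ j ∈ Finset.range (J + 1), (PhiSet (Reach j) (Reach (J - j))).ncard := by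
        apply ncard_biUnion_le
        intro j
        apply Set.Finite.union <;>
          exact Set.Finite.image _ (Set.Finite.prod (Reach_finite _) (Reach_finite _))
    _ ≤ ∑ j ∈ Finset.range (J + 1), 2 * (MR j * MR (J - j)) := by
        apply Finset.sum_le_sum
        intro j _
        exact PhiSet_ncard _ _ (Reach_finite _) (Reach_finite _)

end BE
namespace BE

lemma card_lists_le (L : ℕ) : ({s : NFr | s.length ≤ L}).ncard ≤ 9 ^ L := by
  have hfin : ({s : NFr | s.length ≤ L}).Finite := List.finite_length_le Kl L
  rw [← Nat.card_coe_set_eq]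
  have hinj : Function.Injective
      (fun s : {s : NFr // s ∈ {s : NFr | s.length ≤ L}} => (fun i : Fin L => s.val[(i : ℕ)]?)) := by
    rintro ⟨s, hs⟩ ⟨u, hu⟩ h
    simp only [Subtype.mk.injEq]
    apply List.ext_getElem?
    intro n
    by_cases hn : n < L
    · exact congrFun h ⟨n, hn⟩
    · have h1 : s.length ≤ n := le_trans hs (by omega)
      have h2 : u.length ≤ n := le_trans hu (by omega)
      rw [List.getElem?_eq_none h1, List.getElem?_eq_none h2]
  calc Nat.card {s : NFr // s ∈ {s : NFr | s.length ≤ L}}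
      ≤ Nat.card (Fin L → Option Kl) := Nat.card_le_card_of_injective _ hinj
    _ = Nat.card (Option Kl) ^ Nat.card (Fin L) := Nat.card_fun
    _ = 9 ^ L := by
        rw [Nat.card_eq_fintype_card, Nat.card_eq_fintype_card]
        norm_num

lemma MR_le_pow (t : ℕ) : MR t ≤ 9 ^ (t / 70 + 1) := by
  set L := t / 70 + 1 with hL
  have hsub : Reach t ⊆ nfEval '' {s : NFr | s.length ≤ L} := by
    rintro p ⟨s, hs, he⟩
    refine ⟨s, ?_, he⟩
    have h1 := wNF_length s
    have h2 : 70 * (s.length - 1) ≤ t := le_trans h1 hs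
    have h3 : s.length - 1 ≤ t / 70 := by omega
    simp only [Set.mem_setOf_eq]
    omega
  calc MR t ≤ (nfEval '' {s : NFr | s.length ≤ L}).ncard :=
        Set.ncard_le_ncard hsub (Set.Finite.image _ (List.finite_length_le Kl L))
    _ ≤ ({s : NFr | s.length ≤ L}).ncard := Set.ncard_image_le (List.finite_length_le Kl L)
    _ ≤ 9 ^ L := card_lists_le L

/-! Numeric bounds -/

noncomputable def gg (t : ℕ) : ℝ := 10 * ((t : ℝ) + 1000) ^ ((9:ℝ)/10)

lemma rpow_pow10 (x : ℝ) (hx : 0 ≤ x) : (x ^ ((9:ℝ)/10)) ^ (10 : ℕ) = x ^ (9 : ℕ) := by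
  rw [← Real.rpow_natCast (x ^ ((9:ℝ)/10)) 10, ← Real.rpow_mul hx, ← Real.rpow_natCast x 9]
  norm_num

lemma rpow910_le (a b : ℝ) (ha : 0 ≤ a) (hb : 0 ≤ b)
    (h : a ^ (9 : ℕ) ≤ b ^ (10 : ℕ)) : a ^ ((9:ℝ)/10) ≤ b := by
  have h1 : (a ^ ((9:ℝ)/10)) ^ (10 : ℕ) ≤ b ^ (10 : ℕ) := by
    rw [rpow_pow10 a ha]; exact h
  have h2 : 0 ≤ a ^ ((9:ℝ)/10) := Real.rpow_nonneg ha _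
  exact (pow_le_pow_iff_left₀ h2 hb (by norm_num)).mp h1

lemma le_rpow910 (a b : ℝ) (ha : 0 ≤ a) (hb : 0 ≤ b)
    (h : a ^ (10 : ℕ) ≤ b ^ (9 : ℕ)) : a ≤ b ^ ((9:ℝ)/10) := by
  have h1 : a ^ (10 : ℕ) ≤ (b ^ ((9:ℝ)/10)) ^ (10 : ℕ) := by
    rw [rpow_pow10 b hb]; exact h
  exact (pow_le_pow_iff_left₀ ha (Real.rpow_nonneg hb _) (by norm_num)).mp h1

lemma thousand_rpow : (500 : ℝ) ≤ (1000 : ℝ) ^ ((9:ℝ)/10) := by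
  apply le_rpow910 _ _ (by norm_num) (by norm_num)
  norm_num

lemma gg_ge (t : ℕ) : (5000 : ℝ) ≤ gg t := by
  unfold gg
  have h1 : (1000 : ℝ) ^ ((9:ℝ)/10) ≤ ((t : ℝ) + 1000) ^ ((9:ℝ)/10) := by
    apply Real.rpow_le_rpow (by norm_num)
      (by have := Nat.cast_nonneg (α := ℝ) t; linarith) (by norm_num)
  nlinarith [thousand_rpow]

lemma gg_nonneg (t : ℕ) : 0 ≤ gg t := le_trans (by norm_num) (gg_ge t)

/-- Concavity: `a^(9/10) + b^(9/10) ≤ 2^(1/10) (a+b)^(9/10)`. -/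
lemma concave2 (a b : ℝ) (ha : 0 ≤ a) (hb : 0 ≤ b) :
    a ^ ((9:ℝ)/10) + b ^ ((9:ℝ)/10) ≤ (2:ℝ) ^ ((1:ℝ)/10) * (a + b) ^ ((9:ℝ)/10) := by
  have key := NNReal.rpow_add_le_mul_rpow_add_rpow
    (a.toNNReal ^ ((9:ℝ)/10)) (b.toNNReal ^ ((9:ℝ)/10)) (p := (10:ℝ)/9) (by norm_num)
  have hz1 : (a.toNNReal ^ ((9:ℝ)/10)) ^ ((10:ℝ)/9) = a.toNNReal := by
    rw [← NNReal.rpow_mul]; norm_num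
  have hz2 : (b.toNNReal ^ ((9:ℝ)/10)) ^ ((10:ℝ)/9) = b.toNNReal := by
    rw [← NNReal.rpow_mul]; norm_num
  rw [hz1, hz2] at key
  have key2 := NNReal.rpow_le_rpow key (le_of_lt (by norm_num : (0:ℝ) < (9:ℝ)/10))
  rw [← NNReal.rpow_mul, NNReal.mul_rpow, ← NNReal.rpow_mul] at key2
  norm_num at key2
  have hcast := NNReal.coe_le_coe.mpr key2
  simp only [NNReal.coe_add, NNReal.coe_mul, NNReal.coe_rpow, NNReal.coe_ofNat,
    Real.coe_toNNReal a ha, Real.coe_toNNReal b hb] at hcast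
  exact hcast

end BE
namespace BE

lemma two_rpow_ge_cube (y : ℝ) (hy : 0 ≤ y) : y ^ (3:ℕ) / 125 ≤ (2:ℝ) ^ y := by
  have hlog : (0.6931471803 : ℝ) < Real.log 2 := Real.log_two_gt_d9
  have h1 : (2:ℝ) ^ y = Real.exp (Real.log 2 * y) := by
    rw [Real.rpow_def_of_pos (by norm_num)]
  rw [h1]
  have h5 : Real.exp (Real.log 2 * y) = Real.exp (Real.log 2 * y / 3) ^ (3:ℕ) := by
    rw [← Real.exp_nat_mul]
    congr 1
    push_cast
    ring
  rw [h5]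
  have h3 : y / 5 ≤ Real.exp (Real.log 2 * y / 3) := by
    have := Real.add_one_le_exp (Real.log 2 * y / 3)
    nlinarith
  have h4 : (y / 5) ^ (3:ℕ) ≤ Real.exp (Real.log 2 * y / 3) ^ (3:ℕ) :=
    pow_le_pow_left₀ (by positivity) h3 3
  calc y ^ (3:ℕ) / 125 = (y / 5) ^ (3:ℕ) := by ring
    _ ≤ _ := h4

lemma rpow110_pow10 : ((2:ℝ) ^ ((1:ℝ)/10)) ^ (10 : ℕ) = 2 := by
  rw [← Real.rpow_natCast ((2:ℝ) ^ ((1:ℝ)/10)) 10, ← Real.rpow_mul (by norm_num : (0:ℝ) ≤ 2)]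
  norm_num

lemma key3 (t J : ℕ) (ht : 52000 < t) (hJ : J ≤ (6 * t + 420) / 7) :
    (2:ℝ) ^ ((1:ℝ)/10) * ((J:ℝ) + 2000) ^ ((9:ℝ)/10) ≤
      (29/30) * (((t:ℝ) + 1000) ^ ((9:ℝ)/10)) := by
  set X : ℝ := (J:ℝ) + 2000 with hX
  set Y : ℝ := (t:ℝ) + 1000 with hY
  have hX0 : (0:ℝ) ≤ X := by positivity
  have hY0 : (0:ℝ) ≤ Y := by positivity
  have htr : (52000:ℝ) < (t:ℝ) := by exact_mod_cast ht
  -- X ≤ (22/25) Y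
  have hXY : X ≤ (22/25) * Y := by
    have hn : J * 7 ≤ 6 * t + 420 :=
      le_trans (Nat.mul_le_mul_right 7 hJ) (Nat.div_mul_le_self _ 7)
    have h1 : (J:ℝ) * 7 ≤ 6 * (t:ℝ) + 420 := by exact_mod_cast hn
    rw [hX, hY]
    linarith
  -- 10th power comparison
  have hpow : ((2:ℝ) ^ ((1:ℝ)/10) * X ^ ((9:ℝ)/10)) ^ (10:ℕ) ≤
      ((29/30) * Y ^ ((9:ℝ)/10)) ^ (10:ℕ) := by
    rw [mul_pow, mul_pow, rpow110_pow10, rpow_pow10 X hX0, rpow_pow10 Y hY0]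
    have h9 : X ^ (9:ℕ) ≤ ((22/25) * Y) ^ (9:ℕ) := pow_le_pow_left₀ hX0 hXY 9
    rw [mul_pow] at h9
    have hc : 2 * ((22/25:ℝ) ^ (9:ℕ)) ≤ (29/30:ℝ) ^ (10:ℕ) := by norm_num
    have hY9 : (0:ℝ) ≤ Y ^ (9:ℕ) := by positivity
    have hB : (2 * (22/25:ℝ) ^ (9:ℕ)) * Y ^ (9:ℕ) ≤ (29/30:ℝ) ^ (10:ℕ) * Y ^ (9:ℕ) :=
      mul_le_mul_of_nonneg_right hc hY9
    nlinarith [hB, h9]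
  have hL0 : (0:ℝ) ≤ (2:ℝ) ^ ((1:ℝ)/10) * X ^ ((9:ℝ)/10) := by
    apply mul_nonneg (Real.rpow_nonneg (by norm_num) _) (Real.rpow_nonneg hX0 _)
  have hR0 : (0:ℝ) ≤ (29/30) * Y ^ ((9:ℝ)/10) := by
    apply mul_nonneg (by norm_num) (Real.rpow_nonneg hY0 _)
  exact (pow_le_pow_iff_left₀ hL0 hR0 (by norm_num)).mp hpow

theorem MR_bound : ∀ t : ℕ, (MR t : ℝ) ≤ (2:ℝ) ^ (gg t) := by
  intro t
  induction t using Nat.strong_induction_on with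
  | _ t ih =>
  by_cases ht : t ≤ 52000
  · -- small case
    have h9 : MR t ≤ 9 ^ (t / 70 + 1) := MR_le_pow t
    have h16 : MR t ≤ 16 ^ (t / 70 + 1) :=
      le_trans h9 (Nat.pow_le_pow_left (by norm_num) _)
    have hcast : (MR t : ℝ) ≤ (2:ℝ) ^ ((4 * (t / 70 + 1) : ℕ) : ℝ) := by
      rw [Real.rpow_natCast]
      calc (MR t : ℝ) ≤ ((16 ^ (t / 70 + 1) : ℕ) : ℝ) := by exact_mod_cast h16
        _ = (2:ℝ) ^ (4 * (t / 70 + 1)) := by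
            push_cast
            rw [pow_mul]
            norm_num
    refine le_trans hcast ?_
    apply (Real.rpow_le_rpow_left_iff (by norm_num : (1:ℝ) < 2)).mpr
    have hle : 4 * (t / 70 + 1) ≤ 2976 := by
      have : t / 70 ≤ 742 := by omega
      omega
    calc ((4 * (t / 70 + 1) : ℕ) : ℝ) ≤ 2976 := by exact_mod_cast hle
      _ ≤ 5000 := by norm_num
      _ ≤ gg t := gg_ge t
  · -- large case
    push_neg at ht
    set J := (6 * t + 420) / 7 with hJdef
    have hJt : J < t := by
      rw [hJdef]
      have h7 : 0 < 7 := by norm_num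
      rw [Nat.div_lt_iff_lt_mul h7]
      omega
    have hsum := MR_rec t
    rw [← hJdef] at hsum
    -- uniform bound for each summand
    have hterm : ∀ j, j ∈ Finset.range (J + 1) →
        ((2 * (MR j * MR (J - j)) : ℕ) : ℝ) ≤ (2:ℝ) ^ (1 + (29/30) * gg t) := by
      intro j hj
      have hjJ : j ≤ J := by
        have := Finset.mem_range.mp hj
        omega
      have ih1 : (MR j : ℝ) ≤ (2:ℝ) ^ (gg j) := ih j (lt_of_le_of_lt hjJ hJt)
      have ih2 : (MR (J - j) : ℝ) ≤ (2:ℝ) ^ (gg (J - j)) :=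
        ih (J - j) (lt_of_le_of_lt (by omega) hJt)
      have hgg : gg j + gg (J - j) ≤ (29/30) * gg t := by
        unfold gg
        have hc := concave2 ((j:ℝ) + 1000) (((J - j : ℕ):ℝ) + 1000)
          (by positivity) (by positivity)
        have hcs : ((j:ℝ) + 1000) + (((J - j : ℕ):ℝ) + 1000) = (J:ℝ) + 2000 := by
          have : ((J - j : ℕ):ℝ) = (J:ℝ) - (j:ℝ) := by
            rw [Nat.cast_sub hjJ]
          rw [this]
          ring
        rw [hcs] at hc
        have hk3 := key3 t J ht (le_refl J)
        calc 10 * ((j:ℝ) + 1000) ^ ((9:ℝ)/10) + 10 * (((J - j:ℕ):ℝ) + 1000) ^ ((9:ℝ)/10)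
            = 10 * (((j:ℝ) + 1000) ^ ((9:ℝ)/10) + ((((J - j:ℕ)):ℝ) + 1000) ^ ((9:ℝ)/10)) := by
              ring
          _ ≤ 10 * ((2:ℝ) ^ ((1:ℝ)/10) * ((J:ℝ) + 2000) ^ ((9:ℝ)/10)) := by
              have h10 : (0:ℝ) ≤ 10 := by norm_num
              exact mul_le_mul_of_nonneg_left hc h10
          _ ≤ 10 * ((29/30) * (((t:ℝ) + 1000) ^ ((9:ℝ)/10))) := by
              apply mul_le_mul_of_nonneg_left hk3 (by norm_num)
          _ = (29/30) * (10 * ((t:ℝ) + 1000) ^ ((9:ℝ)/10)) := by ring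
      calc ((2 * (MR j * MR (J - j)) : ℕ) : ℝ)
          = 2 * ((MR j : ℝ) * (MR (J - j) : ℝ)) := by push_cast; ring
        _ ≤ 2 * ((2:ℝ) ^ (gg j) * (2:ℝ) ^ (gg (J - j))) := by
            have hm : (MR j : ℝ) * (MR (J - j) : ℝ) ≤ (2:ℝ) ^ (gg j) * (2:ℝ) ^ (gg (J - j)) :=
              mul_le_mul ih1 ih2 (by positivity) (by positivity)
            linarith
        _ = (2:ℝ) ^ (1 + (gg j + gg (J - j))) := by
            rw [Real.rpow_add (by norm_num), Real.rpow_add (by norm_num), Real.rpow_one]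
        _ ≤ (2:ℝ) ^ (1 + (29/30) * gg t) := by
            apply (Real.rpow_le_rpow_left_iff (by norm_num : (1:ℝ) < 2)).mpr
            linarith
    -- sum them
    have hS : (MR t : ℝ) ≤ ((J:ℝ) + 1) * (2:ℝ) ^ (1 + (29/30) * gg t) := by
      have h1 : (MR t : ℝ) ≤ ((∑ j ∈ Finset.range (J + 1), 2 * (MR j * MR (J - j)) : ℕ) : ℝ) := by
        exact_mod_cast hsum
      rw [Nat.cast_sum] at h1
      refine le_trans h1 ?_
      have h2 := Finset.sum_le_sum hterm
      refine le_trans h2 ?_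
      rw [Finset.sum_const, Finset.card_range, nsmul_eq_mul]
      push_cast
      exact le_refl _
    -- absorb the (J+1) factor
    have habs : ((J:ℝ) + 1) * (2:ℝ) ^ (1 + (29/30) * gg t) ≤ (2:ℝ) ^ (gg t) := by
      set y : ℝ := (1/30) * gg t with hy
      have hy0 : 0 ≤ y := by
        rw [hy]
        have := gg_nonneg t
        linarith
      have htr : (52000:ℝ) < (t:ℝ) := by exact_mod_cast ht
      -- 2 * (t) ≤ 2 ^ y
      have hcube : 2 * ((t:ℝ) + 0) ≤ (2:ℝ) ^ y := by
        refine le_trans ?_ (two_rpow_ge_cube y hy0)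
        -- 2t ≤ y^3/125
        have hyval : y = (1/3) * ((t:ℝ) + 1000) ^ ((9:ℝ)/10) := by
          rw [hy]; unfold gg; ring
        have hY1 : (1:ℝ) ≤ (t:ℝ) + 1000 := by linarith
        have hy3 : y ^ (3:ℕ) = (1/27) * (((t:ℝ) + 1000) ^ ((9:ℝ)/10)) ^ (3:ℕ) := by
          rw [hyval]; ring
        have hrp : (((t:ℝ) + 1000) ^ ((9:ℝ)/10)) ^ (3:ℕ) = ((t:ℝ) + 1000) ^ ((27:ℝ)/10) := by
          rw [← Real.rpow_natCast (((t:ℝ) + 1000) ^ ((9:ℝ)/10)) 3,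
            ← Real.rpow_mul (by linarith)]
          norm_num
        have h2le : ((t:ℝ) + 1000) ^ ((2:ℝ)) ≤ ((t:ℝ) + 1000) ^ ((27:ℝ)/10) := by
          apply Real.rpow_le_rpow_of_exponent_le hY1
          norm_num
        have hquad2 : 6750 * (t:ℝ) ≤ ((t:ℝ) + 1000) ^ ((2:ℝ)) := by
          have hconv : ((t:ℝ) + 1000) ^ ((2:ℝ)) = ((t:ℝ) + 1000) ^ (2:ℕ) := by
            rw [← Real.rpow_natCast ((t:ℝ) + 1000) 2]
            norm_num
          rw [hconv]
          nlinarith [sq_nonneg ((t:ℝ) - 4750)]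
        rw [hy3, hrp]
        linarith [le_trans hquad2 h2le]
      have hJr : ((J:ℝ) + 1) ≤ (t:ℝ) := by
        have : J + 1 ≤ t := hJt
        exact_mod_cast this
      have hfin : ((J:ℝ) + 1) ≤ (2:ℝ) ^ (y - 1) := by
        rw [Real.rpow_sub (by norm_num), Real.rpow_one]
        rw [le_div_iff₀ (by norm_num)]
        calc ((J:ℝ) + 1) * 2 = 2 * ((J:ℝ) + 1) := by ring
          _ ≤ 2 * (t:ℝ) := by linarith
          _ ≤ (2:ℝ) ^ y := by linarith [hcube]
      calc ((J:ℝ) + 1) * (2:ℝ) ^ (1 + (29/30) * gg t)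
          ≤ (2:ℝ) ^ (y - 1) * (2:ℝ) ^ (1 + (29/30) * gg t) := by
            apply mul_le_mul_of_nonneg_right hfin (Real.rpow_nonneg (by norm_num) _)
        _ = (2:ℝ) ^ ((y - 1) + (1 + (29/30) * gg t)) := (Real.rpow_add (by norm_num) _ _).symm
        _ = (2:ℝ) ^ (gg t) := by
            congr 1
            rw [hy]
            ring
    exact le_trans hS habs

end BE
namespace BE

def bK : Kl := (true, false, false)
def cK : Kl := (false, true, false)
def dK : Kl := (true, true, false)
def eK : Kl := (false, false, true)

def aL : Letter := none
def bL : Letter := some bK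
def cL : Letter := some cK
def dL : Letter := some dK
def eL : Letter := some eK

lemma actL_aL : actL aL = aB := rfl
lemma actL_bL : actL bL = bB := by
  funext ξ; rfl
lemma actL_cL : actL cL = cB := by
  funext ξ; rfl
lemma actL_dL : actL dL = dB := by
  funext ξ
  show bB (cB ξ) = dB ξ
  exact bB_cB ξ
lemma actL_eL (ξ : Pt) : actL eL ξ = ξ := rfl

-- distinctness of the generators
lemma perm_apply (f : List Bool → List Bool) (h : Function.Involutive f) (l : List Bool) :
    h.toPerm f l = f l := by
  rw [Function.Involutive.coe_toPerm]

lemma bPerm_ne_aPerm : Grig.bPerm ≠ Grig.aPerm := by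
  intro h
  have h2 : Grig.bPerm [true] = Grig.aPerm [true] := by rw [h]
  rw [Grig.bPerm, Grig.aPerm, perm_apply, perm_apply] at h2
  simp [Grig.aFun, Grig.bFun, Grig.cFun] at h2

lemma cPerm_ne_aPerm : Grig.cPerm ≠ Grig.aPerm := by
  intro h
  have h2 : Grig.cPerm [true] = Grig.aPerm [true] := by rw [h]
  rw [Grig.cPerm, Grig.aPerm, perm_apply, perm_apply] at h2
  simp [Grig.aFun, Grig.cFun, Grig.dFun] at h2

lemma dPerm_ne_aPerm : Grig.dPerm ≠ Grig.aPerm := by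
  intro h
  have h2 : Grig.dPerm [true] = Grig.aPerm [true] := by rw [h]
  rw [Grig.dPerm, Grig.aPerm, perm_apply, perm_apply] at h2
  simp [Grig.aFun, Grig.dFun, Grig.bFun] at h2

lemma cPerm_ne_bPerm : Grig.cPerm ≠ Grig.bPerm := by
  intro h
  have h2 : Grig.cPerm [true, false, true] = Grig.bPerm [true, false, true] := by rw [h]
  rw [Grig.cPerm, Grig.bPerm, perm_apply, perm_apply] at h2
  simp [Grig.bFun, Grig.cFun, Grig.dFun, Grig.aFun] at h2

lemma dPerm_ne_bPerm : Grig.dPerm ≠ Grig.bPerm := by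
  intro h
  have h2 : Grig.dPerm [false, true] = Grig.bPerm [false, true] := by rw [h]
  rw [Grig.dPerm, Grig.bPerm, perm_apply, perm_apply] at h2
  simp [Grig.bFun, Grig.dFun, Grig.aFun] at h2

lemma dPerm_ne_cPerm : Grig.dPerm ≠ Grig.cPerm := by
  intro h
  have h2 : Grig.dPerm [false, true] = Grig.cPerm [false, true] := by rw [h]
  rw [Grig.dPerm, Grig.cPerm, perm_apply, perm_apply] at h2
  simp [Grig.cFun, Grig.dFun, Grig.aFun] at h2

open Classical in
noncomputable def trL (x : Equiv.Perm (List Bool)) : Letter :=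
  if x = Grig.aPerm then aL
  else if x = Grig.bPerm then bL
  else if x = Grig.cPerm then cL
  else dL

lemma actL_trL (x : Equiv.Perm (List Bool)) (hx : x ∈ Grig.Sset) :
    actL (trL x) = boundaryAct x := by
  rcases hx with h | h | h | h
  · subst h
    rw [trL, if_pos rfl]
    rfl
  · subst h
    rw [trL, if_neg bPerm_ne_aPerm, if_pos rfl, actL_bL]
    rfl
  · subst h
    rw [trL, if_neg cPerm_ne_aPerm, if_neg cPerm_ne_bPerm, if_pos rfl, actL_cL]
    rfl
  · subst h
    rw [trL, if_neg dPerm_ne_aPerm, if_neg dPerm_ne_bPerm, if_neg dPerm_ne_cPerm, actL_dL]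
    rfl

lemma trL_not_e (x : Equiv.Perm (List Bool)) : isE (trL x) = false := by
  rw [trL]
  split
  · rfl
  · split
    · rfl
    · split <;> rfl

lemma trL_weight (x : Equiv.Perm (List Bool)) : wLet (trL x) ≤ 90 := by
  rw [trL]
  split
  · exact (by norm_num : (70:ℕ) ≤ 90)
  · split
    · exact le_refl _
    · split
      · exact (by norm_num : (66:ℕ) ≤ 90)
      · exact (by norm_num : (46:ℕ) ≤ 90)

noncomputable def transl (l : List (Equiv.Perm (List Bool))) : List Letter := l.map trL

lemma transl_eval (l : List (Equiv.Perm (List Bool))) (hl : ∀ x ∈ l, x ∈ Grig.Sset) :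
    ∀ ξ : Pt, wordApplyB l ξ = (pairEval (transl l)).2 ξ := by
  induction l with
  | nil => intro ξ; rfl
  | cons s l ih =>
      intro ξ
      have hs : s ∈ Grig.Sset := hl s (by simp)
      have hl' : ∀ x ∈ l, x ∈ Grig.Sset := fun x hx => hl x (by simp [hx])
      show wordApplyB l (boundaryAct s ξ) = ((pairEval (transl l)).2 ∘ actL (trL s)) ξ
      rw [Function.comp_apply, actL_trL s hs]
      exact ih hl' _

/-- The set of inverted-orbit points of a `Letter` word. -/
def ptsOf (v : List Letter) : Set Pt := {x | ∃ i, x = (pairEval (v.drop i)).2 rhoInf}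

lemma ptsOf_nil : ptsOf [] = {rhoInf} := by
  ext x
  constructor
  · rintro ⟨i, hi⟩
    simp only [List.drop_nil] at hi
    exact hi
  · rintro rfl
    exact ⟨0, rfl⟩

lemma ptsOf_cons (ℓ : Letter) (v : List Letter) :
    ptsOf (ℓ :: v) = insert ((pairEval (ℓ :: v)).2 rhoInf) (ptsOf v) := by
  ext x
  constructor
  · rintro ⟨i, hi⟩
    match i with
    | 0 => exact Or.inl hi
    | (j+1) => exact Or.inr ⟨j, hi⟩
  · rintro (h | ⟨j, hj⟩)
    · exact ⟨0, h⟩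
    · exact ⟨j + 1, hj⟩

lemma rho_mem_ptsOf (v : List Letter) : rhoInf ∈ ptsOf v :=
  ⟨v.length, by rw [List.drop_length]; rfl⟩

lemma ptsOf_eq_invOrbit (l : List (Equiv.Perm (List Bool))) (hl : ∀ x ∈ l, x ∈ Grig.Sset) :
    invOrbitB l rhoInf = ptsOf (transl l) := by
  ext x
  constructor
  · rintro ⟨i, hi⟩
    refine ⟨i, ?_⟩
    rw [hi]
    have hdm : (transl l).drop i = transl (l.drop i) := List.map_drop.symm
    rw [hdm]
    exact transl_eval (l.drop i) (fun x hx => hl x (List.mem_of_mem_drop hx)) rhoInf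
  · rintro ⟨i, hi⟩
    refine ⟨i, ?_⟩
    rw [hi]
    have hdm : (transl l).drop i = transl (l.drop i) := List.map_drop.symm
    rw [hdm]
    exact (transl_eval (l.drop i) (fun x hx => hl x (List.mem_of_mem_drop hx)) rhoInf).symm

open Classical in
noncomputable def insT (T : Set Pt) : List Letter → List Letter
  | [] => if rhoInf ∈ T then [eL] else []
  | ℓ :: v => if (pairEval (ℓ :: v)).2 rhoInf ∈ T ∧ (pairEval (ℓ :: v)).2 rhoInf ∉ ptsOf v
      then eL :: ℓ :: insT T v else ℓ :: insT T v

def eFree (v : List Letter) : Prop := ∀ ℓ ∈ v, isE ℓ = false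

lemma insT_eval (T : Set Pt) : ∀ v : List Letter, eFree v →
    (pairEval (insT T v)).1 = T ∩ ptsOf v ∧
    (pairEval (insT T v)).2 = (pairEval v).2 := by
  intro v
  induction v with
  | nil =>
      intro _
      rw [ptsOf_nil]
      by_cases h : rhoInf ∈ T
      · rw [insT, if_pos h]
        constructor
        · show cond (isE eL) (symmDiff (∅ : Set Pt) {id rhoInf}) ∅ = T ∩ {rhoInf}
          show symmDiff (∅ : Set Pt) {rhoInf} = T ∩ {rhoInf}
          have hsd : symmDiff (∅ : Set Pt) {rhoInf} = {rhoInf} := by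
            ext y
            simp [Set.mem_symmDiff]
          rw [hsd]
          ext y
          simp only [Set.mem_singleton_iff, Set.mem_inter_iff]
          constructor
          · rintro rfl; exact ⟨h, rfl⟩
          · rintro ⟨_, hy⟩; exact hy
        · show (id ∘ actL eL) = id
          funext ξ; rfl
      · rw [insT, if_neg h]
        constructor
        · show (∅ : Set Pt) = T ∩ {rhoInf}
          ext y
          simp only [Set.mem_empty_iff_false, Set.mem_inter_iff, Set.mem_singleton_iff]
          constructor
          · intro hy; exact hy.elim
          · rintro ⟨hyT, rfl⟩; exact h hyT
        · rfl
  | cons ℓ v ih =>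
      intro hef
      have hefv : eFree v := fun x hx => hef x (by simp [hx])
      have hℓ : isE ℓ = false := hef ℓ (by simp)
      obtain ⟨ih1, ih2⟩ := ih hefv
      set p₀ := (pairEval (ℓ :: v)).2 rhoInf with hp₀
      have hF : (pairEval (ℓ :: insT T v)).2 = (pairEval (ℓ :: v)).2 := by
        show (pairEval (insT T v)).2 ∘ actL ℓ = (pairEval v).2 ∘ actL ℓ
        rw [ih2]
      have hL : (pairEval (ℓ :: insT T v)).1 = T ∩ ptsOf v := by
        show cond (isE ℓ) _ _ = _
        rw [hℓ]
        exact ih1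
      rw [ptsOf_cons]
      by_cases h : p₀ ∈ T ∧ p₀ ∉ ptsOf v
      · rw [insT, if_pos h]
        constructor
        · have hshape : (pairEval (eL :: ℓ :: insT T v)).1 =
              symmDiff (pairEval (ℓ :: insT T v)).1 {(pairEval (ℓ :: insT T v)).2 rhoInf} := rfl
          rw [hshape, hL, hF, ← hp₀]
          have hdisj : Disjoint (T ∩ ptsOf v) {p₀} := by
            rw [Set.disjoint_singleton_right]
            intro hc
            exact h.2 hc.2
          rw [Disjoint.symmDiff_eq_sup hdisj]
          ext y
          simp only [Set.sup_eq_union, Set.mem_union, Set.mem_inter_iff,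
            Set.mem_singleton_iff, Set.mem_insert_iff]
          constructor
          · rintro (⟨h1, h2⟩ | rfl)
            · exact ⟨h1, Or.inr h2⟩
            · exact ⟨h.1, Or.inl rfl⟩
          · rintro ⟨h1, h2 | h3⟩
            · exact Or.inr h2
            · exact Or.inl ⟨h1, h3⟩
        · show (pairEval (ℓ :: insT T v)).2 ∘ actL eL = (pairEval (ℓ :: v)).2
          rw [hF]
          funext ξ
          rfl
      · rw [insT, if_neg h]
        refine ⟨?_, hF⟩
        rw [hL]
        push_neg at h
        ext y
        simp only [Set.mem_inter_iff, Set.mem_insert_iff]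
        constructor
        · rintro ⟨h1, h2⟩
          exact ⟨h1, Or.inr h2⟩
        · rintro ⟨h1, rfl | h3⟩
          · exact ⟨h1, h h1⟩
          · exact ⟨h1, h3⟩

lemma insT_weight (T : Set Pt) : ∀ v : List Letter,
    wWord (insT T v) ≤ wWord v + v.length + 1 := by
  intro v
  induction v with
  | nil =>
      by_cases h : rhoInf ∈ T
      · rw [insT, if_pos h]
        show wLet eL + 0 ≤ 0 + 0 + 1
        exact le_refl _
      · rw [insT, if_neg h]
        show (0:ℕ) ≤ 0 + 0 + 1
        omega
  | cons ℓ v ih =>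
      by_cases h : (pairEval (ℓ :: v)).2 rhoInf ∈ T ∧ (pairEval (ℓ :: v)).2 rhoInf ∉ ptsOf v
      · rw [insT, if_pos h]
        show wLet eL + (wLet ℓ + wWord (insT T v)) ≤ wLet ℓ + wWord v + (v.length + 1) + 1
        have he : wLet eL = 1 := rfl
        omega
      · rw [insT, if_neg h]
        show wLet ℓ + wWord (insT T v) ≤ wLet ℓ + wWord v + (v.length + 1) + 1
        omega

lemma ptsOf_finite (v : List Letter) : (ptsOf v).Finite := by
  have h : ptsOf v ⊆ (fun i => (pairEval (v.drop i)).2 rhoInf) '' (Set.Iic v.length) := by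
    rintro x ⟨i, hi⟩
    by_cases hiv : i ≤ v.length
    · exact ⟨i, Set.mem_Iic.mpr hiv, hi.symm⟩
    · refine ⟨v.length, Set.mem_Iic.mpr (le_refl _), ?_⟩
      show (pairEval (v.drop v.length)).2 rhoInf = x
      rw [List.drop_length]
      rw [List.drop_eq_nil_of_le (by omega : v.length ≤ i)] at hi
      exact hi.symm
  exact Set.Finite.subset (Set.Finite.image _ (Set.finite_Iic _)) h

end BE
namespace BE

lemma transl_weight (l : List (Equiv.Perm (List Bool))) :
    wWord (transl l) ≤ 90 * l.length := by
  induction l with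
  | nil => exact le_refl _
  | cons s l ih =>
      show wLet (trL s) + wWord (transl l) ≤ 90 * (l.length + 1)
      have := trL_weight s
      omega

lemma transl_eFree (l : List (Equiv.Perm (List Bool))) : eFree (transl l) := by
  intro ℓ hℓ
  obtain ⟨x, _, rfl⟩ := List.mem_map.mp hℓ
  exact trL_not_e x

lemma insT_mem_Reach (T : Set Pt) (l : List (Equiv.Perm (List Bool))) (m : ℕ)
    (hm : 1 ≤ m) (hlen : l.length ≤ m) :
    pairEval (insT T (transl l)) ∈ Reach (92 * m) := by
  apply pairEval_mem_Reach
  have h1 := insT_weight T (transl l)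
  have h2 := transl_weight l
  have h3 : (transl l).length = l.length := List.length_map _
  omega

lemma card_ptsOf_le (v : List Letter) : Nat.card (ptsOf v) ≤ v.length + 1 := by
  rw [Nat.card_coe_set_eq]
  have h : ptsOf v ⊆ (fun i => (pairEval (v.drop i)).2 rhoInf) '' (Set.Iic v.length) := by
    rintro x ⟨i, hi⟩
    by_cases hiv : i ≤ v.length
    · exact ⟨i, Set.mem_Iic.mpr hiv, hi.symm⟩
    · refine ⟨v.length, Set.mem_Iic.mpr (le_refl _), ?_⟩
      show (pairEval (v.drop v.length)).2 rhoInf = x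
      rw [List.drop_length]
      rw [List.drop_eq_nil_of_le (by omega : v.length ≤ i)] at hi
      exact hi.symm
  calc (ptsOf v).ncard
      ≤ ((fun i => (pairEval (v.drop i)).2 rhoInf) '' (Set.Iic v.length)).ncard :=
        Set.ncard_le_ncard h (Set.Finite.image _ (Set.finite_Iic _))
    _ ≤ (Set.Iic v.length).ncard := Set.ncard_image_le (Set.finite_Iic _)
    _ = v.length + 1 := by
        rw [← Finset.coe_Iic, Set.ncard_coe_finset, Nat.card_Iic]

lemma key_count (l : List (Equiv.Perm (List Bool))) (hl : ∀ x ∈ l, x ∈ Grig.Sset)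
    (m : ℕ) (hm : 1 ≤ m) (hlen : l.length ≤ m) :
    2 ^ (Nat.card (invOrbitB l rhoInf)) ≤ MR (92 * m) := by
  set v := transl l with hv
  have hOv : invOrbitB l rhoInf = ptsOf v := ptsOf_eq_invOrbit l hl
  have hOfin : (invOrbitB l rhoInf).Finite := by
    rw [hOv]; exact ptsOf_finite v
  set F := hOfin.toFinset with hF
  have hFcard : F.card = Nat.card (invOrbitB l rhoInf) := by
    rw [hF, Nat.card_coe_set_eq, Set.ncard_eq_toFinset_card _ hOfin]
  have hRfin := Reach_finite (92 * m)
  have hmap : ∀ S ∈ F.powerset, pairEval (insT (↑S) v) ∈ hRfin.toFinset := by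
    intro S _
    rw [Set.Finite.mem_toFinset]
    exact insT_mem_Reach (↑S) l m hm hlen
  have hinj : ∀ S ∈ F.powerset, ∀ S' ∈ F.powerset,
      pairEval (insT (↑S) v) = pairEval (insT (↑S') v) → S = S' := by
    intro S hS S' hS' heq
    have hSsub : (↑S : Set Pt) ⊆ ptsOf v := by
      intro y hy
      rw [← hOv]
      have := Finset.mem_powerset.mp hS
      have hyF : y ∈ F := this (by exact_mod_cast hy)
      rwa [hF, Set.Finite.mem_toFinset] at hyF
    have hS'sub : (↑S' : Set Pt) ⊆ ptsOf v := by
      intro y hy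
      rw [← hOv]
      have := Finset.mem_powerset.mp hS'
      have hyF : y ∈ F := this (by exact_mod_cast hy)
      rwa [hF, Set.Finite.mem_toFinset] at hyF
    have h1 := (insT_eval (↑S) v (transl_eFree l)).1
    have h2 := (insT_eval (↑S') v (transl_eFree l)).1
    have hlam : (↑S : Set Pt) = (↑S' : Set Pt) := by
      have e1 : (↑S : Set Pt) ∩ ptsOf v = (↑S : Set Pt) := Set.inter_eq_left.mpr hSsub
      have e2 : (↑S' : Set Pt) ∩ ptsOf v = (↑S' : Set Pt) := Set.inter_eq_left.mpr hS'sub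
      rw [← e1, ← e2, ← h1, ← h2, heq]
    exact Finset.coe_injective hlam
  have hcard := Finset.card_le_card_of_injOn _ hmap hinj
  rw [Finset.card_powerset, hFcard] at hcard
  have hR : hRfin.toFinset.card = MR (92 * m) := by
    rw [MR, Set.ncard_eq_toFinset_card _ hRfin]
  rw [hR] at hcard
  exact hcard

lemma norb_le (m : ℕ) (hm : 1 ≤ m) : NorbB m ≤ MR (92 * m) := by
  rw [NorbB]
  have hRfin := Reach_finite (92 * m)
  haveI : Finite ↥(Reach (92 * m)) := hRfin.to_subtype
  have hinj : ∃ f : {O : Set (ℕ → Bool) | ∃ l : List (Equiv.Perm (List Bool)),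
      (∀ x ∈ l, x ∈ Grig.Sset) ∧ l.length ≤ m ∧ O = invOrbitB l rhoInf} → ↥(Reach (92 * m)),
      Function.Injective f := by
    refine ⟨fun O => ⟨pairEval (insT O.val (transl (Classical.choose O.property))),
      ?_⟩, ?_⟩
    · obtain ⟨h1, h2, _⟩ := Classical.choose_spec O.property
      exact insT_mem_Reach _ _ m hm h2
    · intro O₁ O₂ heq
      have heq' : pairEval (insT O₁.val (transl (Classical.choose O₁.property))) =
          pairEval (insT O₂.val (transl (Classical.choose O₂.property))) := by
        exact_mod_cast congrArg Subtype.val heq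
      obtain ⟨ha1, ha2, ha3⟩ := Classical.choose_spec O₁.property
      obtain ⟨hb1, hb2, hb3⟩ := Classical.choose_spec O₂.property
      have hO1 : O₁.val = ptsOf (transl (Classical.choose O₁.property)) :=
        ha3.trans (ptsOf_eq_invOrbit _ ha1)
      have hO2 : O₂.val = ptsOf (transl (Classical.choose O₂.property)) :=
        hb3.trans (ptsOf_eq_invOrbit _ hb1)
      have e1 := (insT_eval O₁.val (transl (Classical.choose O₁.property))
        (transl_eFree _)).1
      have e2 := (insT_eval O₂.val (transl (Classical.choose O₂.property))
        (transl_eFree _)).1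
      have : O₁.val = O₂.val := by
        have g1 : O₁.val ∩ ptsOf (transl (Classical.choose O₁.property)) = O₁.val :=
          Set.inter_eq_left.mpr hO1.subset
        have g2 : O₂.val ∩ ptsOf (transl (Classical.choose O₂.property)) = O₂.val :=
          Set.inter_eq_left.mpr hO2.subset
        calc O₁.val = O₁.val ∩ ptsOf (transl (Classical.choose O₁.property)) := g1.symm
          _ = (pairEval (insT O₁.val (transl (Classical.choose O₁.property)))).1 := e1.symm
          _ = (pairEval (insT O₂.val (transl (Classical.choose O₂.property)))).1 := by
              rw [heq']
          _ = O₂.val ∩ ptsOf (transl (Classical.choose O₂.property)) := e2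
          _ = O₂.val := g2
      exact Subtype.ext this
  obtain ⟨f, hf⟩ := hinj
  calc Nat.card _ ≤ Nat.card ↥(Reach (92 * m)) := Nat.card_le_card_of_injective f hf
    _ = MR (92 * m) := by rw [MR, Nat.card_coe_set_eq]

lemma DeltaB_mem (m : ℕ) : ∃ l : List (Equiv.Perm (List Bool)),
    (∀ x ∈ l, x ∈ Grig.Sset) ∧ l.length ≤ m ∧
    DeltaB m = Nat.card (invOrbitB l rhoInf) := by
  have hne : {k | ∃ l : List (Equiv.Perm (List Bool)),
      (∀ x ∈ l, x ∈ Grig.Sset) ∧ l.length ≤ m ∧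
      k = Nat.card (invOrbitB l rhoInf)}.Nonempty := by
    refine ⟨Nat.card (invOrbitB [] rhoInf), [], ?_, ?_, rfl⟩
    · intro x hx
      exact absurd hx List.not_mem_nil
    · simp
  have hbdd : BddAbove {k | ∃ l : List (Equiv.Perm (List Bool)),
      (∀ x ∈ l, x ∈ Grig.Sset) ∧ l.length ≤ m ∧
      k = Nat.card (invOrbitB l rhoInf)} := by
    refine ⟨m + 1, ?_⟩
    rintro k ⟨l, hl, hlen, rfl⟩
    rw [ptsOf_eq_invOrbit l hl]
    have h1 := card_ptsOf_le (transl l)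
    have h2 : (transl l).length = l.length := List.length_map _
    omega
  have hmem := Nat.sSup_mem hne hbdd
  obtain ⟨l, hl, hlen, hk⟩ := hmem
  exact ⟨l, hl, hlen, hk⟩

end BE
namespace BE

lemma gg_le_final (m : ℕ) (hm : 1 ≤ m) : gg (92 * m) ≤ 10920 * (m:ℝ) ^ ((9:ℝ)/10) := by
  unfold gg
  have hm1 : (1:ℝ) ≤ (m:ℝ) := by exact_mod_cast hm
  have h1 : ((92 * m : ℕ):ℝ) + 1000 ≤ 1092 * (m:ℝ) := by push_cast; nlinarith
  have h2 : (((92 * m : ℕ):ℝ) + 1000) ^ ((9:ℝ)/10) ≤ (1092 * (m:ℝ)) ^ ((9:ℝ)/10) :=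
    Real.rpow_le_rpow (by positivity) h1 (by norm_num)
  have h3 : (1092 * (m:ℝ)) ^ ((9:ℝ)/10) = (1092:ℝ) ^ ((9:ℝ)/10) * (m:ℝ) ^ ((9:ℝ)/10) :=
    Real.mul_rpow (by norm_num) (by positivity)
  have h4 : (1092:ℝ) ^ ((9:ℝ)/10) ≤ 1092 := by
    calc (1092:ℝ) ^ ((9:ℝ)/10) ≤ (1092:ℝ) ^ ((1:ℝ)) :=
        Real.rpow_le_rpow_of_exponent_le (by norm_num) (by norm_num)
      _ = 1092 := Real.rpow_one _
  have h5 : (0:ℝ) ≤ (m:ℝ) ^ ((9:ℝ)/10) := Real.rpow_nonneg (by positivity) _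
  calc 10 * ((((92 * m : ℕ)):ℝ) + 1000) ^ ((9:ℝ)/10)
      ≤ 10 * ((1092:ℝ) ^ ((9:ℝ)/10) * (m:ℝ) ^ ((9:ℝ)/10)) := by rw [← h3]; linarith
    _ ≤ 10 * (1092 * (m:ℝ) ^ ((9:ℝ)/10)) := by nlinarith
    _ = 10920 * (m:ℝ) ^ ((9:ℝ)/10) := by ring

end BE

theorem bartholdi_erschler_inverted_orbits' :
    ∃ C : ℝ, 0 < C ∧ ∃ α : ℝ, 0 < α ∧ α < 1 ∧ ∀ m : ℕ, 1 ≤ m →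
      (DeltaB m : ℝ) ≤ C * (m : ℝ) ^ α ∧
      (NorbB m : ℝ) ≤ Real.exp (C * (m : ℝ) ^ α) := by
  refine ⟨10920, by norm_num, (9:ℝ)/10, by norm_num, by norm_num, ?_⟩
  intro m hm
  have hMB := BE.MR_bound (92 * m)
  constructor
  · obtain ⟨l, hl, hlen, hk⟩ := BE.DeltaB_mem m
    rw [hk]
    have hkey := BE.key_count l hl m hm hlen
    have hreal : ((2 ^ Nat.card (invOrbitB l rhoInf) : ℕ) : ℝ) ≤ (2:ℝ) ^ (BE.gg (92 * m)) :=
      le_trans (by exact_mod_cast hkey) hMB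
    have hconv : ((2 ^ Nat.card (invOrbitB l rhoInf) : ℕ) : ℝ)
        = (2:ℝ) ^ ((Nat.card (invOrbitB l rhoInf) : ℕ) : ℝ) := by
      rw [Real.rpow_natCast]
      push_cast
      ring
    rw [hconv] at hreal
    have hd : ((Nat.card (invOrbitB l rhoInf) : ℕ) : ℝ) ≤ BE.gg (92 * m) :=
      (Real.rpow_le_rpow_left_iff (by norm_num : (1:ℝ) < 2)).mp hreal
    exact le_trans hd (BE.gg_le_final m hm)
  · have hN := BE.norb_le m hm
    calc (NorbB m : ℝ) ≤ (BE.MR (92 * m) : ℝ) := by exact_mod_cast hN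
      _ ≤ (2:ℝ) ^ (BE.gg (92 * m)) := hMB
      _ ≤ Real.exp (BE.gg (92 * m)) := by
          rw [Real.rpow_def_of_pos (by norm_num : (0:ℝ) < 2)]
          apply Real.exp_le_exp.mpr
          have hl2 : Real.log 2 ≤ 1 := by
            have := Real.log_le_sub_one_of_pos (by norm_num : (0:ℝ) < 2)
            linarith
          have hgn := BE.gg_nonneg (92 * m)
          nlinarith
      _ ≤ Real.exp (10920 * (m:ℝ) ^ ((9:ℝ)/10)) :=
          Real.exp_le_exp.mpr (BE.gg_le_final m hm)
/-- **Bartholdi–Erschler bounds** on the inverted orbit growth of the Grigorchuk group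
acting on the orbit of `ρ = 1^∞`: there are constants `C > 0` and `0 < α < 1` such that
`Δ_ρ^S(m) ≤ C m^α` and `N_ρ^S(m) ≤ exp(C m^α)` for every `m ≥ 1`. -/
theorem bartholdi_erschler_inverted_orbits :
    ∃ C : ℝ, 0 < C ∧ ∃ α : ℝ, 0 < α ∧ α < 1 ∧ ∀ m : ℕ, 1 ≤ m →
      (DeltaB m : ℝ) ≤ C * (m : ℝ) ^ α ∧
      (NorbB m : ℝ) ≤ Real.exp (C * (m : ℝ) ^ α) := by
  exact bartholdi_erschler_inverted_orbits'

end
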